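/- Let X be a real Hilbert space, let Q be a finite index set, let (P_i)_{i ∈ Q} be nonempty closed convex subsets of X, and let a ∈ X. Define F : X^Q → ℝ ∪ {+∞} by F(y) = ½‖a − Σ_{i ∈ Q} y_i‖² + Σ_{i ∈ Q} δ*(y_i, P_i). If ỹ ∈ X^Q is a minimizer of F with F(ỹ) < +∞, then for every y ∈ X^Q one has F(ỹ) ≤ F(y) − ½‖Σ_{i ∈ Q}(y_i − ỹ_i)‖². (Block strong-convexity decrease estimate underlying inequality (5.5) of Proposition 5.3, used for the SHQP step.) -/

import Mathlib

open scoped RealInnerProductSpace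

/-- The support function `δ*(z, D) = sup_{x ∈ D} ⟪z, x⟫`, with values in `EReal`. -/
noncomputable def suppFn {X : Type*} [NormedAddCommGroup X] [InnerProductSpace ℝ X]
    (z : X) (D : Set X) : EReal :=
  ⨆ x ∈ D, ((⟪z, x⟫ : ℝ) : EReal)

/-- The block objective `F(y) = ½‖a − ∑ i y i‖² + ∑ i δ*(y i, P i)`. -/
noncomputable def Fobj {X : Type*} [NormedAddCommGroup X] [InnerProductSpace ℝ X]
    {Q : Type*} [Fintype Q] (P : Q → Set X) (a : X) (y : Q → X) : EReal :=
  ((1 / 2 * ‖a - ∑ i, y i‖ ^ 2 : ℝ) : EReal) + ∑ i, suppFn (y i) (P i)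

lemma ereal_coe_sum {ι : Type*} (s : Finset ι) (f : ι → ℝ) :
    ((∑ i ∈ s, f i : ℝ) : EReal) = ∑ i ∈ s, ((f i : ℝ) : EReal) := by
  induction s using Finset.cons_induction with
  | empty => simp
  | cons a s ha ih => rw [Finset.sum_cons, Finset.sum_cons, EReal.coe_add, ih]

lemma suppFn_ne_bot {X : Type*} [NormedAddCommGroup X] [InnerProductSpace ℝ X]
    (z : X) {D : Set X} (hD : D.Nonempty) : suppFn z D ≠ ⊥ := by
  obtain ⟨x, hx⟩ := hD
  have h : ((⟪z, x⟫ : ℝ) : EReal) ≤ suppFn z D :=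
    le_iSup₂ (f := fun x (_ : x ∈ D) => ((⟪z, x⟫ : ℝ) : EReal)) x hx
  intro hb
  rw [hb, le_bot_iff] at h
  exact EReal.coe_ne_bot _ h

lemma ereal_sum_ne_bot {ι : Type*} (s : Finset ι) (f : ι → EReal)
    (h : ∀ i ∈ s, f i ≠ ⊥) : ∑ i ∈ s, f i ≠ ⊥ := by
  induction s using Finset.cons_induction with
  | empty => simp
  | cons a s ha ih =>
    rw [Finset.sum_cons]
    intro hb
    rcases EReal.add_eq_bot_iff.mp hb with h1 | h1
    · exact h a (Finset.mem_cons_self a s) h1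
    · exact ih (fun i hi => h i (Finset.mem_cons_of_mem hi)) h1

lemma ereal_sum_term_ne_top {ι : Type*} (s : Finset ι) (f : ι → EReal)
    (hbot : ∀ i ∈ s, f i ≠ ⊥) (htop : ∑ i ∈ s, f i ≠ ⊤) :
    ∀ j ∈ s, f j ≠ ⊤ := by
  classical
  intro j hj hfj
  apply htop
  rw [← Finset.add_sum_erase s f hj, hfj]
  exact EReal.top_add_of_ne_bot
    (ereal_sum_ne_bot _ _ fun i hi => hbot i (Finset.mem_of_mem_erase hi))

lemma suppFn_le_of_forall {X : Type*} [NormedAddCommGroup X] [InnerProductSpace ℝ X]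
    (z : X) (D : Set X) (c : ℝ) (h : ∀ x ∈ D, ⟪z, x⟫ ≤ c) :
    suppFn z D ≤ (c : EReal) :=
  iSup₂_le fun x hx => EReal.coe_le_coe_iff.mpr (h x hx)

lemma forall_le_of_suppFn_eq {X : Type*} [NormedAddCommGroup X] [InnerProductSpace ℝ X]
    (z : X) (D : Set X) (c : ℝ) (h : suppFn z D = (c : EReal)) :
    ∀ x ∈ D, ⟪z, x⟫ ≤ c := by
  intro x hx
  have hle : ((⟪z, x⟫ : ℝ) : EReal) ≤ suppFn z D :=
    le_iSup₂ (f := fun x (_ : x ∈ D) => ((⟪z, x⟫ : ℝ) : EReal)) x hx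
  rw [h] at hle
  exact EReal.coe_le_coe_iff.mp hle

/-- Block strong-convexity decrease estimate (underlying (5.5)): if `ỹ` minimizes
`F` with `F(ỹ) < +∞`, then `F(ỹ) + ½‖∑ i (y i − ỹ i)‖² ≤ F(y)` for all `y`. -/
theorem block_strong_convexity_decrease {X : Type*} [NormedAddCommGroup X]
    [InnerProductSpace ℝ X] [CompleteSpace X] {Q : Type*} [Fintype Q]
    (P : Q → Set X) (hne : ∀ i, (P i).Nonempty) (hcl : ∀ i, IsClosed (P i))
    (hcv : ∀ i, Convex ℝ (P i)) (a : X) (ytil : Q → X)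
    (hmin : ∀ y : Q → X, Fobj P a ytil ≤ Fobj P a y)
    (hfin : Fobj P a ytil < ⊤) :
    ∀ y : Q → X,
      Fobj P a ytil + ((1 / 2 * ‖∑ i, (y i - ytil i)‖ ^ 2 : ℝ) : EReal) ≤ Fobj P a y := by
  intro y
  by_cases hytop : Fobj P a y = ⊤
  · rw [hytop]; exact le_top
  -- Each support-function value at ytil and y is a finite real.
  have hsum_ytil_ne_top : (∑ i, suppFn (ytil i) (P i)) ≠ ⊤ := by
    intro h
    apply hfin.ne
    rw [Fobj, h]
    exact EReal.add_top_of_ne_bot (EReal.coe_ne_bot _)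
  have hsum_y_ne_top : (∑ i, suppFn (y i) (P i)) ≠ ⊤ := by
    intro h
    apply hytop
    rw [Fobj, h]
    exact EReal.add_top_of_ne_bot (EReal.coe_ne_bot _)
  have ht' : ∀ i, suppFn (ytil i) (P i) = (((suppFn (ytil i) (P i)).toReal : ℝ) : EReal) :=
    fun i => (EReal.coe_toReal
      (ereal_sum_term_ne_top _ _ (fun j _ => suppFn_ne_bot _ (hne j)) hsum_ytil_ne_top i
        (Finset.mem_univ i))
      (suppFn_ne_bot _ (hne i))).symm
  have hs' : ∀ i, suppFn (y i) (P i) = (((suppFn (y i) (P i)).toReal : ℝ) : EReal) :=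
    fun i => (EReal.coe_toReal
      (ereal_sum_term_ne_top _ _ (fun j _ => suppFn_ne_bot _ (hne j)) hsum_y_ne_top i
        (Finset.mem_univ i))
      (suppFn_ne_bot _ (hne i))).symm
  set t : Q → ℝ := fun i => (suppFn (ytil i) (P i)).toReal with htdef
  set s : Q → ℝ := fun i => (suppFn (y i) (P i)).toReal with hsdef
  set St : X := ∑ i, ytil i with hStdef
  set Sy : X := ∑ i, y i with hSydef
  set u : X := a - St with hudef
  set d : X := Sy - St with hddef
  set c : ℝ := 1 / 2 * ‖d‖ ^ 2 with hcdef
  have hc0 : 0 ≤ c := by positivity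
  have hFytil : Fobj P a ytil = (((1 / 2 * ‖u‖ ^ 2 + ∑ i, t i : ℝ)) : EReal) := by
    rw [Fobj, EReal.coe_add, ereal_coe_sum]
    congr 1
    exact Finset.sum_congr rfl fun i _ => ht' i
  have hFy : Fobj P a y = (((1 / 2 * ‖a - Sy‖ ^ 2 + ∑ i, s i : ℝ)) : EReal) := by
    rw [Fobj, EReal.coe_add, ereal_coe_sum]
    congr 1
    exact Finset.sum_congr rfl fun i _ => hs' i
  -- pointwise bounds from support function values
  have htb : ∀ i, ∀ x ∈ P i, ⟪ytil i, x⟫ ≤ t i :=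
    fun i => forall_le_of_suppFn_eq _ _ _ (ht' i)
  have hsb : ∀ i, ∀ x ∈ P i, ⟪y i, x⟫ ≤ s i :=
    fun i => forall_le_of_suppFn_eq _ _ _ (hs' i)
  -- key step: for all small positive l
  have key : ∀ l : ℝ, 0 < l → l ≤ 1 →
      1 / 2 * ‖u‖ ^ 2 + ∑ i, t i + (1 - l) * c ≤ 1 / 2 * ‖a - Sy‖ ^ 2 + ∑ i, s i := by
    intro l hl hl1
    have hm := hmin (fun i => ytil i + l • (y i - ytil i))
    -- sum of the moved points
    have hsum : ∑ i, (ytil i + l • (y i - ytil i)) = St + l • d := by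
      rw [Finset.sum_add_distrib, ← Finset.smul_sum, Finset.sum_sub_distrib]
    -- bound the support terms
    have hsupb : ∀ i, suppFn (ytil i + l • (y i - ytil i)) (P i)
        ≤ (((1 - l) * t i + l * s i : ℝ) : EReal) := by
      intro i
      apply suppFn_le_of_forall
      intro x hx
      have h1 := htb i x hx
      have h2 := hsb i x hx
      rw [inner_add_left, real_inner_smul_left, inner_sub_left]
      nlinarith
    have hsumb : (∑ i, suppFn (ytil i + l • (y i - ytil i)) (P i))
        ≤ ((∑ i, ((1 - l) * t i + l * s i) : ℝ) : EReal) := by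
      rw [ereal_coe_sum]
      exact Finset.sum_le_sum fun i _ => hsupb i
    have hFl : Fobj P a (fun i => ytil i + l • (y i - ytil i))
        ≤ (((1 / 2 * ‖a - (St + l • d)‖ ^ 2 + ∑ i, ((1 - l) * t i + l * s i) : ℝ)) : EReal) := by
      rw [Fobj, EReal.coe_add, hsum]
      exact add_le_add_right hsumb _
    have hreal : (1 / 2 * ‖u‖ ^ 2 + ∑ i, t i : ℝ)
        ≤ 1 / 2 * ‖a - (St + l • d)‖ ^ 2 + ∑ i, ((1 - l) * t i + l * s i) := by
      have := le_trans (hFytil ▸ hm) hFl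
      exact_mod_cast this
    -- quadratic identities
    have hq1 : ‖a - (St + l • d)‖ ^ 2 = ‖u‖ ^ 2 - 2 * (l * ⟪u, d⟫) + l ^ 2 * ‖d‖ ^ 2 := by
      have : a - (St + l • d) = u - l • d := by rw [hudef]; abel
      rw [this, @norm_sub_sq_real, real_inner_smul_right, norm_smul, mul_pow, Real.norm_eq_abs,
        sq_abs]
    have hq2 : ‖a - Sy‖ ^ 2 = ‖u‖ ^ 2 - 2 * ⟪u, d⟫ + ‖d‖ ^ 2 := by
      have : a - Sy = u - d := by rw [hudef, hddef]; abel
      rw [this, @norm_sub_sq_real]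
    -- sum splitting
    have hsplit : (∑ i, ((1 - l) * t i + l * s i) : ℝ)
        = (1 - l) * ∑ i, t i + l * ∑ i, s i := by
      rw [Finset.sum_add_distrib, Finset.mul_sum, Finset.mul_sum]
    rw [hq1, hsplit] at hreal
    rw [hq2]
    have h2 : l * (1 / 2 * ‖u‖ ^ 2 + ∑ i, t i + (1 - l) * c)
        ≤ l * (1 / 2 * (‖u‖ ^ 2 - 2 * ⟪u, d⟫ + ‖d‖ ^ 2) + ∑ i, s i) := by
      rw [hcdef]; nlinarith
    exact le_of_mul_le_mul_left h2 hl
  -- pass to the limit l → 0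
  have hfinal : 1 / 2 * ‖u‖ ^ 2 + ∑ i, t i + c ≤ 1 / 2 * ‖a - Sy‖ ^ 2 + ∑ i, s i := by
    apply le_of_forall_pos_le_add
    intro ε hε
    set l : ℝ := min 1 (ε / (c + 1)) with hldef
    have hl : 0 < l := lt_min one_pos (by positivity)
    have hl1 : l ≤ 1 := min_le_left _ _
    have hk := key l hl hl1
    have hlc : l * c ≤ ε := by
      have h1 : l ≤ ε / (c + 1) := min_le_right _ _
      have h2 : l * c ≤ (ε / (c + 1)) * c := by
        apply mul_le_mul_of_nonneg_right h1 hc0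
      have h3 : (ε / (c + 1)) * c ≤ ε := by
        rw [div_mul_eq_mul_div, div_le_iff₀ (by positivity)]
        nlinarith
      linarith
    linarith
  -- conclude
  have hnorm : ∑ i, (y i - ytil i) = d := by
    rw [hddef, hSydef, hStdef, Finset.sum_sub_distrib]
  rw [hFytil, hFy, hnorm, ← EReal.coe_add]
  exact_mod_cast hfinal
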